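/- Let q_1, …, q_N ∈ ℤ^k and let the torus T = (ℂ*)^k act on ℂ^N by t · z = (t^{q_1} z_1, …, t^{q_N} z_N), where t^{q_i} = Π_{j=1}^k t_j^{q_{ij}}. Define the moment map μ: ℂ^N → ℝ^k by μ(z) = Σ_{i=1}^N |z_i|² q_i. Then for every z ∈ ℂ^N and c ∈ ℝ^k, the closure of the orbit T·z in ℂ^N (Euclidean topology) meets μ^{-1}(c) if and only if c lies in the convex cone generated by { q_i : z_i ≠ 0 }. -/

import Mathlib

open Filter Topology

namespace OrbitConeProof

variable {N k : ℕ}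

/-- Real row vectors of the weight matrix. -/
def Qr (q : Fin N → Fin k → ℤ) (i : Fin N) : Fin k → ℝ := fun j => (q i j : ℝ)

/-- Euclidean dot product on `Fin k → ℝ`. -/
def dot (u v : Fin k → ℝ) : ℝ := ∑ j, u j * v j

lemma dot_zero_left (v : Fin k → ℝ) : dot 0 v = 0 := by
  simp [dot]

lemma dot_smul_left (a : ℝ) (u v : Fin k → ℝ) : dot (a • u) v = a * dot u v := by
  simp [dot, Finset.mul_sum, mul_assoc]

lemma dot_add_smul_left (u g v : Fin k → ℝ) (t : ℝ) :
    dot (u + t • g) v = dot u v + t * dot g v := by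
  simp [dot, Finset.mul_sum, add_mul, Finset.sum_add_distrib, mul_assoc]

lemma dot_self_nonneg (v : Fin k → ℝ) : 0 ≤ dot v v :=
  Finset.sum_nonneg fun j _ => mul_self_nonneg _

lemma eq_zero_of_dot_self (v : Fin k → ℝ) (h : dot v v = 0) : v = 0 := by
  funext j
  have h0 : ∀ i ∈ Finset.univ, (0:ℝ) ≤ v i * v i := fun i _ => mul_self_nonneg _
  have := (Finset.sum_eq_zero_iff_of_nonneg h0).1 h j (Finset.mem_univ j)
  simpa [mul_self_eq_zero] using this

/-- Dot product with fixed first argument, as a linear map in the second argument. -/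
def dotL (v : Fin k → ℝ) : (Fin k → ℝ) →ₗ[ℝ] ℝ where
  toFun w := dot v w
  map_add' w w' := by simp [dot, mul_add, Finset.sum_add_distrib]
  map_smul' a w := by
    simp [dot, Finset.mul_sum, smul_eq_mul]; congr 1; funext j; ring

/-- The torus orbit of `z`. -/
def Orb (q : Fin N → Fin k → ℤ) (z : Fin N → ℂ) : Set (Fin N → ℂ) :=
  {w : Fin N → ℂ | ∃ t : Fin k → ℂˣ, w = fun i => (∏ j, (t j : ℂ) ^ (q i j)) * z i}

lemma prod_exp_zpow (q : Fin N → Fin k → ℤ) (i : Fin N) (u : Fin k → ℝ) :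
    (∏ j, ((Real.exp (u j) : ℂ)) ^ (q i j)) = (Real.exp (dot u (Qr q i)) : ℂ) := by
  have h1 : ∀ j, ((Real.exp (u j) : ℂ)) ^ (q i j) = Complex.exp ((q i j : ℂ) * (u j : ℂ)) := by
    intro j
    rw [Complex.ofReal_exp, ← Complex.exp_int_mul]
  rw [Finset.prod_congr rfl (fun j _ => h1 j), ← Complex.exp_sum]
  have : (∑ j, (q i j : ℂ) * (u j : ℂ)) = ((dot u (Qr q i) : ℝ) : ℂ) := by
    rw [dot, Complex.ofReal_sum]
    refine Finset.sum_congr rfl fun j _ => ?_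
    simp [Qr]
    ring
  rw [this, Complex.ofReal_exp]

lemma exp_mem_orb (q : Fin N → Fin k → ℤ) (z : Fin N → ℂ) (u : Fin k → ℝ) :
    (fun i => ((Real.exp (dot u (Qr q i)) : ℝ) : ℂ) * z i) ∈ Orb q z := by
  refine ⟨fun j => Units.mk0 ((Real.exp (u j) : ℂ))
    (by exact_mod_cast Complex.ofReal_ne_zero.2 (Real.exp_ne_zero _)), ?_⟩
  funext i
  simp only [Units.val_mk0]
  rw [prod_exp_zpow]

lemma self_mem_orb (q : Fin N → Fin k → ℤ) (z : Fin N → ℂ) : z ∈ Orb q z := by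
  refine ⟨fun _ => 1, ?_⟩
  funext i
  simp


lemma orb_smul_mem (q : Fin N → Fin k → ℤ) (z : Fin N → ℂ) (t : Fin k → ℂˣ)
    {w : Fin N → ℂ} (hw : w ∈ Orb q z) :
    (fun i => (∏ j, (t j : ℂ) ^ (q i j)) * w i) ∈ Orb q z := by
  obtain ⟨s, rfl⟩ := hw
  refine ⟨fun j => t j * s j, ?_⟩
  funext i
  simp only [Units.val_mul, mul_zpow, Finset.prod_mul_distrib]
  ring

lemma closure_orb_mono (q : Fin N → Fin k → ℤ) (z z' : Fin N → ℂ)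
    (hz' : z' ∈ closure (Orb q z)) :
    closure (Orb q z') ⊆ closure (Orb q z) := by
  refine closure_minimal ?_ isClosed_closure
  rintro w ⟨t, rfl⟩
  set Φ : (Fin N → ℂ) → (Fin N → ℂ) := fun w i => (∏ j, (t j : ℂ) ^ (q i j)) * w i with hΦ
  have hcont : Continuous Φ := by
    apply continuous_pi
    intro i
    exact continuous_const.mul (continuous_apply i)
  have h1 : Φ z' ∈ closure (Φ '' Orb q z) :=
    image_closure_subset_closure_image hcont ⟨z', hz', rfl⟩
  have h2 : Φ '' Orb q z ⊆ Orb q z := by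
    rintro _ ⟨w, hw, rfl⟩
    exact orb_smul_mem q z t hw
  exact closure_mono h2 h1

/-- The Kempf–Ness-type functional. -/
noncomputable def f (q : Fin N → Fin k → ℤ) (z : Fin N → ℂ) (c : Fin k → ℝ) (u : Fin k → ℝ) : ℝ :=
  ∑ i, ‖z i‖ ^ 2 * Real.exp (2 * dot u (Qr q i)) / 2 - dot u c

lemma f_zero (q : Fin N → Fin k → ℤ) (z : Fin N → ℂ) (c : Fin k → ℝ) :
    f q z c 0 = ∑ i, ‖z i‖ ^ 2 / 2 := by
  simp [f, dot_zero_left, dot]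

lemma f_cont (q : Fin N → Fin k → ℤ) (z : Fin N → ℂ) (c : Fin k → ℝ) :
    Continuous (f q z c) := by
  have hdot : ∀ v : Fin k → ℝ, Continuous fun u : Fin k → ℝ => dot u v := by
    intro v
    exact continuous_finset_sum _ fun j _ => (continuous_apply j).mul continuous_const
  apply Continuous.sub ?_ (hdot c)
  apply continuous_finset_sum _ fun i _ => ?_
  exact ((continuous_const.mul ((continuous_const.mul (hdot (Qr q i))).rexp)).div_const 2)

lemma f_smul_le (q : Fin N → Fin k → ℤ) (z : Fin N → ℂ) (c : Fin k → ℝ)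
    {l : ℝ} (hl0 : 0 ≤ l) (hl1 : l ≤ 1) (u : Fin k → ℝ) (hu : f q z c u ≤ f q z c 0) :
    f q z c (l • u) ≤ f q z c 0 := by
  have key : ∀ x : ℝ, Real.exp (l * x) ≤ (1 - l) + l * Real.exp x := by
    intro x
    have := convexOn_exp.2 (Set.mem_univ (0:ℝ)) (Set.mem_univ x)
      (by linarith : (0:ℝ) ≤ 1 - l) hl0 (by ring)
    simpa using this
  have hmain : f q z c (l • u) ≤ (1 - l) * f q z c 0 + l * f q z c u := by
    have hsum : ∑ i, ‖z i‖ ^ 2 * Real.exp (2 * dot (l • u) (Qr q i)) / 2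
        ≤ ∑ i, ‖z i‖ ^ 2 * ((1 - l) + l * Real.exp (2 * dot u (Qr q i))) / 2 := by
      refine Finset.sum_le_sum fun i _ => ?_
      have h1 : Real.exp (2 * dot (l • u) (Qr q i))
          ≤ (1 - l) + l * Real.exp (2 * dot u (Qr q i)) := by
        rw [dot_smul_left]
        have := key (2 * dot u (Qr q i))
        calc Real.exp (2 * (l * dot u (Qr q i)))
            = Real.exp (l * (2 * dot u (Qr q i))) := by ring_nf
          _ ≤ _ := this
      have h2 : (0:ℝ) ≤ ‖z i‖ ^ 2 := by positivity
      nlinarith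
    have heq : ∑ i, ‖z i‖ ^ 2 * ((1 - l) + l * Real.exp (2 * dot u (Qr q i))) / 2
        = (1 - l) * (∑ i, ‖z i‖ ^ 2 / 2)
          + l * (∑ i, ‖z i‖ ^ 2 * Real.exp (2 * dot u (Qr q i)) / 2) := by
      rw [Finset.mul_sum, Finset.mul_sum, ← Finset.sum_add_distrib]
      refine Finset.sum_congr rfl fun i _ => ?_
      ring
    have hlin : dot (l • u) c = l * dot u c := dot_smul_left l u c
    rw [f_zero]
    simp only [f] at *
    rw [hlin]
    linarith [hsum, heq]
  have h0 : f q z c u ≤ f q z c 0 := hu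
  nlinarith [hmain]


/-- Gradient of `f` at `u0`. -/
noncomputable def grad (q : Fin N → Fin k → ℤ) (z : Fin N → ℂ) (c : Fin k → ℝ)
    (u0 : Fin k → ℝ) : Fin k → ℝ :=
  fun j => (∑ i, ‖z i‖ ^ 2 * Real.exp (2 * dot u0 (Qr q i)) * Qr q i j) - c j

lemma grad_eq_zero_of_min (q : Fin N → Fin k → ℤ) (z : Fin N → ℂ) (c : Fin k → ℝ)
    (u0 : Fin k → ℝ)
    (hmin : ∀ t : ℝ, f q z c u0 ≤ f q z c (u0 + t • grad q z c u0)) :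
    grad q z c u0 = 0 := by
  set g := grad q z c u0 with hg
  set φ : ℝ → ℝ := fun t => f q z c (u0 + t • g) with hφdef
  have hφ : φ = fun t =>
      (∑ i, ‖z i‖ ^ 2 * Real.exp (2 * dot u0 (Qr q i) + t * (2 * dot g (Qr q i))) / 2)
        - (dot u0 c + t * dot g c) := by
    funext t
    simp only [hφdef, f, dot_add_smul_left]
    congr 1
    refine Finset.sum_congr rfl fun i _ => ?_
    have : 2 * (dot u0 (Qr q i) + t * dot g (Qr q i))
        = 2 * dot u0 (Qr q i) + t * (2 * dot g (Qr q i)) := by ring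
    rw [this]
  have hD : HasDerivAt φ
      ((∑ i, ‖z i‖ ^ 2 * (Real.exp (2 * dot u0 (Qr q i) + 0 * (2 * dot g (Qr q i)))
          * (1 * (2 * dot g (Qr q i)))) / 2) - 1 * dot g c) 0 := by
    rw [hφ]
    apply HasDerivAt.sub
    · apply HasDerivAt.fun_sum
      intro i _
      exact ((((((hasDerivAt_id (0:ℝ)).mul_const _).const_add _).exp).const_mul _).div_const _)
    · exact ((hasDerivAt_id (0:ℝ)).mul_const _).const_add _
  have hDval : (∑ i, ‖z i‖ ^ 2 * (Real.exp (2 * dot u0 (Qr q i) + 0 * (2 * dot g (Qr q i)))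
      * (1 * (2 * dot g (Qr q i)))) / 2) - 1 * dot g c = dot g g := by
    have h1 : ∑ i, ‖z i‖ ^ 2 * (Real.exp (2 * dot u0 (Qr q i) + 0 * (2 * dot g (Qr q i)))
        * (1 * (2 * dot g (Qr q i)))) / 2
        = ∑ j, ∑ i, g j * (‖z i‖ ^ 2 * Real.exp (2 * dot u0 (Qr q i)) * Qr q i j) := by
      rw [Finset.sum_comm]
      refine Finset.sum_congr rfl fun i _ => ?_
      have : ‖z i‖ ^ 2 * (Real.exp (2 * dot u0 (Qr q i) + 0 * (2 * dot g (Qr q i)))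
          * (1 * (2 * dot g (Qr q i)))) / 2
          = (‖z i‖ ^ 2 * Real.exp (2 * dot u0 (Qr q i))) * dot g (Qr q i) := by ring
      have hd : dot g (Qr q i) = ∑ j, g j * Qr q i j := rfl
      rw [this, hd, Finset.mul_sum]
      refine Finset.sum_congr rfl fun j _ => ?_
      ring
    rw [h1]
    have hgc : dot g c = ∑ j, g j * c j := rfl
    have hgg : dot g g = ∑ j, g j * g j := rfl
    rw [hgc, hgg, one_mul, ← Finset.sum_sub_distrib]
    refine Finset.sum_congr rfl fun j _ => ?_
    rw [← Finset.mul_sum, ← mul_sub]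
    have hgj : g j = (∑ i, ‖z i‖ ^ 2 * Real.exp (2 * dot u0 (Qr q i)) * Qr q i j) - c j := rfl
    rw [← hgj]
  rw [hDval] at hD
  have hloc : IsLocalMin φ 0 := by
    have h0 : φ 0 = f q z c u0 := by simp [hφdef]
    exact Filter.Eventually.of_forall fun t => by rw [h0]; exact hmin t
  have := hloc.hasDerivAt_eq_zero hD
  exact eq_zero_of_dot_self g this

/-- The span of the weight vectors supported on the nonzero coordinates of `z`. -/
def P (q : Fin N → Fin k → ℤ) (z : Fin N → ℂ) : Submodule ℝ (Fin k → ℝ) :=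
  Submodule.span ℝ (Qr q '' {i | z i ≠ 0})

lemma sum_smul_mem_P (q : Fin N → Fin k → ℤ) (z : Fin N → ℂ) (b : Fin N → ℝ)
    (hb : ∀ i, z i = 0 → b i = 0) : ∑ i, b i • Qr q i ∈ P q z := by
  refine Submodule.sum_mem _ fun i _ => ?_
  by_cases hzi : z i = 0
  · rw [hb i hzi, zero_smul]; exact Submodule.zero_mem _
  · exact Submodule.smul_mem _ _ (Submodule.subset_span ⟨i, hzi, rfl⟩)

lemma eq_zero_of_mem_P_orth (q : Fin N → Fin k → ℤ) (z : Fin N → ℂ) (v : Fin k → ℝ)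
    (hv : v ∈ P q z) (horth : ∀ i, z i ≠ 0 → dot v (Qr q i) = 0) : v = 0 := by
  have hle : P q z ≤ LinearMap.ker (dotL v) := by
    rw [P, Submodule.span_le]
    rintro x ⟨i, hi, rfl⟩
    exact LinearMap.mem_ker.2 (horth i hi)
  have : dot v v = 0 := hle hv
  exact eq_zero_of_dot_self v this


lemma limit_mem_closure (q : Fin N → Fin k → ℤ) (z : Fin N → ℂ) (v : Fin k → ℝ)
    (hq : ∀ i, z i ≠ 0 → dot v (Qr q i) ≤ 0) :
    (fun i => if dot v (Qr q i) = 0 then z i else 0) ∈ closure (Orb q z) := by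
  refine mem_closure_of_tendsto (b := (Filter.atTop : Filter ℕ)) (f := fun n : ℕ =>
    (fun i => ((Real.exp (dot ((n:ℝ) • v) (Qr q i)) : ℝ) : ℂ) * z i)) ?_
    (Filter.Eventually.of_forall fun n => exp_mem_orb q z ((n:ℝ) • v))
  rw [tendsto_pi_nhds]
  intro i
  by_cases hz : z i = 0
  · simp only [hz, mul_zero, if_pos, if_neg]
    have : (if dot v (Qr q i) = 0 then (0:ℂ) else 0) = 0 := by
      split <;> rfl
    rw [hz] at *
    simpa [this] using tendsto_const_nhds
  · by_cases hd : dot v (Qr q i) = 0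
    · simp only [if_pos hd, dot_smul_left, hd, mul_zero, Real.exp_zero,
        Complex.ofReal_one, one_mul]
      exact tendsto_const_nhds
    · have hdlt : dot v (Qr q i) < 0 := lt_of_le_of_ne (hq i hz) hd
      simp only [if_neg hd, dot_smul_left]
      have hpow : Filter.Tendsto (fun n : ℕ => Real.exp ((n:ℝ) * dot v (Qr q i)))
          Filter.atTop (𝓝 0) := by
        have heq : (fun n : ℕ => Real.exp ((n:ℝ) * dot v (Qr q i)))
            = fun n : ℕ => (Real.exp (dot v (Qr q i))) ^ n := by
          funext n
          rw [← Real.exp_nat_mul]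
        rw [heq]
        exact tendsto_pow_atTop_nhds_zero_of_lt_one (Real.exp_nonneg _)
          (Real.exp_lt_one_iff.2 hdlt)
      have : Filter.Tendsto (fun n : ℕ => ((Real.exp ((n:ℝ) * dot v (Qr q i)) : ℝ) : ℂ) * z i)
          Filter.atTop (𝓝 (((0:ℝ):ℂ) * z i)) :=
        ((Complex.continuous_ofReal.tendsto 0).comp hpow).mul_const (z i)
      simpa using this


lemma key (q : Fin N → Fin k → ℤ) (c : Fin k → ℝ) :
    ∀ n : ℕ, ∀ z : Fin N → ℂ, (Finset.univ.filter fun i => z i ≠ 0).card = n →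
    ∀ s : Fin N → ℝ, (∀ i, 0 ≤ s i) → (∀ i, z i = 0 → s i = 0) →
    c = ∑ i, s i • Qr q i →
    ∃ w ∈ closure (Orb q z), (∑ i, ‖w i‖ ^ 2 • Qr q i) = c := by
  intro n
  induction n using Nat.strong_induction_on with
  | _ n ih =>
  intro z hcard s hs0 hsz hc
  have hcP : c ∈ P q z := hc ▸ sum_smul_mem_P q z s hsz
  set K : Set (Fin k → ℝ) :=
    (↑(P q z) : Set (Fin k → ℝ)) ∩ {u | f q z c u ≤ f q z c 0} with hKdef
  have hKclosed : IsClosed K :=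
    IsClosed.inter (Submodule.closed_of_finiteDimensional _)
      (isClosed_le (f_cont q z c) continuous_const)
  have h0K : (0 : Fin k → ℝ) ∈ K := ⟨Submodule.zero_mem _, Set.mem_setOf.2 (le_refl _)⟩
  by_cases hbdd : Bornology.IsBounded K
  · -- bounded case: minimum attained, gradient vanishes
    have hcpt : IsCompact K := Metric.isCompact_of_isClosed_isBounded hKclosed hbdd
    obtain ⟨u0, hu0K, hu0min⟩ := hcpt.exists_isMinOn ⟨0, h0K⟩ (f_cont q z c).continuousOn
    have hgmem : grad q z c u0 ∈ P q z := by
      have h1 : grad q z c u0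
          = (∑ i, (‖z i‖ ^ 2 * Real.exp (2 * dot u0 (Qr q i))) • Qr q i) - c := by
        funext j
        simp [grad, Finset.sum_apply, Pi.smul_apply, smul_eq_mul]
      rw [h1]
      refine Submodule.sub_mem _ (sum_smul_mem_P q z _ fun i hzi => by simp [hzi]) hcP
    have hmin' : ∀ t : ℝ, f q z c u0 ≤ f q z c (u0 + t • grad q z c u0) := by
      intro t
      have hxP : u0 + t • grad q z c u0 ∈ P q z :=
        Submodule.add_mem _ hu0K.1 (Submodule.smul_mem _ _ hgmem)
      by_cases hx : f q z c (u0 + t • grad q z c u0) ≤ f q z c 0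
      · exact hu0min ⟨hxP, hx⟩
      · exact le_trans (hu0min h0K) (le_of_not_ge hx)
    have hg0 := grad_eq_zero_of_min q z c u0 hmin'
    refine ⟨fun i => ((Real.exp (dot u0 (Qr q i)) : ℝ) : ℂ) * z i,
      subset_closure (exp_mem_orb q z u0), ?_⟩
    funext j
    have hgj : (∑ i, ‖z i‖ ^ 2 * Real.exp (2 * dot u0 (Qr q i)) * Qr q i j) - c j = 0 :=
      congrFun hg0 j
    rw [Finset.sum_apply]
    simp only [Pi.smul_apply, smul_eq_mul]
    have hnorm : ∀ i, ‖((Real.exp (dot u0 (Qr q i)) : ℝ) : ℂ) * z i‖ ^ 2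
        = ‖z i‖ ^ 2 * Real.exp (2 * dot u0 (Qr q i)) := by
      intro i
      rw [norm_mul, mul_pow, Complex.norm_real, Real.norm_eq_abs, Real.abs_exp, two_mul,
        Real.exp_add, sq]
      ring
    calc ∑ i, ‖((Real.exp (dot u0 (Qr q i)) : ℝ) : ℂ) * z i‖ ^ 2 * Qr q i j
        = ∑ i, ‖z i‖ ^ 2 * Real.exp (2 * dot u0 (Qr q i)) * Qr q i j :=
          Finset.sum_congr rfl fun i _ => by rw [hnorm i]
      _ = c j := by linarith [hgj]
  · -- unbounded case: find a destabilizing direction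
    rw [isBounded_iff_forall_norm_le] at hbdd
    push_neg at hbdd
    have hseq : ∀ n : ℕ, ∃ u, u ∈ K ∧ (n : ℝ) < ‖u‖ := by
      intro m
      obtain ⟨x, hxK, hx⟩ := hbdd m
      exact ⟨x, hxK, hx⟩
    choose u huK hun using hseq
    have hupos : ∀ m, 0 < ‖u m‖ := fun m =>
      lt_of_le_of_lt (Nat.cast_nonneg m) (hun m)
    set vs : ℕ → (Fin k → ℝ) := fun m => ‖u m‖⁻¹ • u m with hvs
    have hsph : ∀ m, vs m ∈ Metric.sphere (0 : Fin k → ℝ) 1 := by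
      intro m
      rw [mem_sphere_iff_norm, sub_zero, norm_smul, norm_inv, norm_norm,
        inv_mul_cancel₀ (hupos m).ne']
    obtain ⟨v, hvsph, φ, hφmono, hφtend⟩ := (isCompact_sphere (0:Fin k → ℝ) 1).tendsto_subseq hsph
    have hv1 : ‖v‖ = 1 := by
      have := mem_sphere_iff_norm.1 hvsph
      simpa using this
    have hvP : v ∈ P q z := by
      have hcl : IsClosed ((P q z : Set (Fin k → ℝ))) := Submodule.closed_of_finiteDimensional _
      exact hcl.mem_of_tendsto hφtend (Filter.Eventually.of_forall fun m =>
        Submodule.smul_mem _ _ (huK (φ m)).1)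
    have hfv : ∀ t : ℝ, 0 ≤ t → f q z c (t • v) ≤ f q z c 0 := by
      intro t ht
      have htend : Filter.Tendsto (fun m => f q z c (t • vs (φ m))) Filter.atTop
          (𝓝 (f q z c (t • v))) :=
        ((f_cont q z c).tendsto (t • v)).comp (hφtend.const_smul t)
      refine le_of_tendsto htend ?_
      have hlarge : ∀ᶠ m in Filter.atTop, t ≤ ‖u (φ m)‖ := by
        filter_upwards [Filter.eventually_ge_atTop ⌈t⌉₊] with m hm
        have h1 : (m : ℝ) ≤ ‖u (φ m)‖ :=
          le_trans (Nat.cast_le.2 hφmono.le_apply) (le_of_lt (hun (φ m)))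
        calc t ≤ (⌈t⌉₊ : ℝ) := Nat.le_ceil t
          _ ≤ (m : ℝ) := Nat.cast_le.2 hm
          _ ≤ ‖u (φ m)‖ := h1
      filter_upwards [hlarge] with m hm
      have h2 : t • vs (φ m) = (t * ‖u (φ m)‖⁻¹) • u (φ m) := by
        rw [hvs, smul_smul]
      rw [h2]
      refine f_smul_le q z c (by positivity) ?_ _ (huK (φ m)).2
      have := (div_le_one (hupos (φ m))).2 hm
      simpa [div_eq_mul_inv] using this
    have hq' : ∀ i, z i ≠ 0 → dot v (Qr q i) ≤ 0 := by
      intro i hzi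
      by_contra hpos
      push_neg at hpos
      have hapos : (0:ℝ) < ‖z i‖ ^ 2 := by
        have := norm_pos_iff.2 hzi
        positivity
      have key1 : ∀ t : ℝ, 0 ≤ t →
          ‖z i‖ ^ 2 * (dot v (Qr q i)) ^ 2 / 2 * t ^ 2 ≤ f q z c 0 + t * dot v c := by
        intro t ht
        have hle := hfv t ht
        have hsingle : ‖z i‖ ^ 2 * Real.exp (2 * dot (t • v) (Qr q i)) / 2
            ≤ ∑ i', ‖z i'‖ ^ 2 * Real.exp (2 * dot (t • v) (Qr q i')) / 2 :=
          Finset.single_le_sum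
            (f := fun i' => ‖z i'‖ ^ 2 * Real.exp (2 * dot (t • v) (Qr q i')) / 2)
            (fun i' _ => by positivity) (Finset.mem_univ i)
        have hf' : f q z c (t • v)
            = (∑ i', ‖z i'‖ ^ 2 * Real.exp (2 * dot (t • v) (Qr q i')) / 2) - t * dot v c := by
          rw [f, dot_smul_left]
        have hd : dot (t • v) (Qr q i) = t * dot v (Qr q i) := dot_smul_left t v _
        rw [hd] at hsingle
        have h6 : ‖z i‖ ^ 2 * Real.exp (2 * (t * dot v (Qr q i))) / 2
            ≤ f q z c 0 + t * dot v c := by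
          rw [hf'] at hle
          linarith
        have hexp : Real.exp (2 * (t * dot v (Qr q i)))
            = Real.exp (t * dot v (Qr q i)) ^ 2 := by
          rw [two_mul, Real.exp_add, sq]
        have hlin : t * dot v (Qr q i) ≤ Real.exp (t * dot v (Qr q i)) := by
          linarith [Real.add_one_le_exp (t * dot v (Qr q i))]
        have htγ : 0 ≤ t * dot v (Qr q i) := mul_nonneg ht (le_of_lt hpos)
        nlinarith [h6, hexp, hlin, htγ, hapos,
          mul_le_mul hlin hlin htγ (le_trans htγ hlin)]
      have hα : 0 < ‖z i‖ ^ 2 * (dot v (Qr q i)) ^ 2 / 2 := by positivity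
      set α := ‖z i‖ ^ 2 * (dot v (Qr q i)) ^ 2 / 2 with hαdef
      set F := f q z c 0 with hF
      set D := dot v c with hD
      set t0 := max 1 ((|F| + |D| + 1) / α) with ht0def
      have ht0 : (0:ℝ) ≤ t0 := le_trans zero_le_one (le_max_left _ _)
      have h7 := key1 t0 ht0
      have h8 : (|F| + |D| + 1) / α ≤ t0 := le_max_right _ _
      have h9 : |F| + |D| + 1 ≤ α * t0 := by
        rw [div_le_iff₀ hα] at h8
        linarith
      have h10 : (1:ℝ) ≤ t0 := le_max_left _ _
      nlinarith [le_abs_self F, le_abs_self D, abs_nonneg F, abs_nonneg D, h7, h9, h10,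
        mul_le_mul_of_nonneg_right h9 ht0,
        mul_le_mul_of_nonneg_left h10 (abs_nonneg F),
        mul_le_mul_of_nonneg_right (le_abs_self D) ht0]
    have hdvc0 : 0 ≤ dot v c := by
      by_contra hneg
      push_neg at hneg
      set t := (|f q z c 0| + 1) / (-(dot v c)) with htdef
      have hnegpos : 0 < -(dot v c) := by linarith
      have ht : 0 ≤ t := by positivity
      have h5 : 0 ≤ ∑ i, ‖z i‖ ^ 2 * Real.exp (2 * dot (t • v) (Qr q i)) / 2 :=
        Finset.sum_nonneg fun i _ => by positivity
      have hle := hfv t ht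
      have hf' : f q z c (t • v)
          = (∑ i, ‖z i‖ ^ 2 * Real.exp (2 * dot (t • v) (Qr q i)) / 2) - t * dot v c := by
        rw [f, dot_smul_left]
      have h4 : -(t * dot v c) ≤ f q z c 0 := by
        rw [hf'] at hle
        linarith
      have heq : -(t * dot v c) = |f q z c 0| + 1 := by
        rw [htdef]
        field_simp
        rw [div_self (ne_of_lt hneg)]
      rw [heq] at h4
      linarith [le_abs_self (f q z c 0)]
    have hzero : ∀ i, s i * dot v (Qr q i) = 0 := by
      have hsum0 : ∑ i, s i * dot v (Qr q i) = dot v c := by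
        rw [hc]
        have : dotL v (∑ i, s i • Qr q i) = ∑ i, s i * dot v (Qr q i) := by
          rw [map_sum]
          refine Finset.sum_congr rfl fun i _ => ?_
          rw [map_smul, smul_eq_mul]
          rfl
        exact this.symm
      have hle0 : ∀ i ∈ Finset.univ, s i * dot v (Qr q i) ≤ 0 := by
        intro i _
        by_cases hzi : z i = 0
        · rw [hsz i hzi, zero_mul]
        · exact mul_nonpos_iff.2 (Or.inl ⟨hs0 i, hq' i hzi⟩)
      have hsumz : ∑ i, s i * dot v (Qr q i) = 0 :=
        le_antisymm (Finset.sum_nonpos hle0) (by rw [hsum0]; exact hdvc0)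
      intro i
      exact (Finset.sum_eq_zero_iff_of_nonpos hle0).1 hsumz i (Finset.mem_univ i)
    have hex : ∃ i0, z i0 ≠ 0 ∧ dot v (Qr q i0) ≠ 0 := by
      by_contra hno
      push_neg at hno
      have hv0 := eq_zero_of_mem_P_orth q z v hvP fun i hi => hno i hi
      rw [hv0] at hv1
      simp at hv1
    obtain ⟨i0, hzi0, hdi0⟩ := hex
    set z' : Fin N → ℂ := fun i => if dot v (Qr q i) = 0 then z i else 0 with hz'def
    have hz'cl : z' ∈ closure (Orb q z) := limit_mem_closure q z v hq'
    have hsub : closure (Orb q z') ⊆ closure (Orb q z) := closure_orb_mono q z z' hz'cl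
    have hsubset : (Finset.univ.filter fun i => z' i ≠ 0)
        ⊆ (Finset.univ.filter fun i => z i ≠ 0) := by
      intro i hi
      rw [Finset.mem_filter] at hi ⊢
      refine ⟨Finset.mem_univ _, ?_⟩
      intro hzi
      apply hi.2
      rw [hz'def]
      simp [hzi]
    have hcard' : (Finset.univ.filter fun i => z' i ≠ 0).card < n := by
      rw [← hcard]
      apply Finset.card_lt_card
      rw [Finset.ssubset_iff_of_subset hsubset]
      refine ⟨i0, ?_, ?_⟩
      · rw [Finset.mem_filter]; exact ⟨Finset.mem_univ _, hzi0⟩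
      · rw [Finset.mem_filter]
        push_neg
        intro _
        rw [hz'def]
        simp [hdi0]
    have hsz' : ∀ i, z' i = 0 → s i = 0 := by
      intro i hzi'
      by_cases hd : dot v (Qr q i) = 0
      · refine hsz i ?_
        rw [hz'def] at hzi'
        simpa [hd] using hzi'
      · rcases mul_eq_zero.1 (hzero i) with h | h
        · exact h
        · exact absurd h hd
    obtain ⟨w, hw1, hw2⟩ := ih _ hcard' z' rfl s hs0 hsz' hc
    exact ⟨w, hsub hw1, hw2⟩

end OrbitConeProof

/-- The torus `T = (ℂ*)^k` acts on `ℂ^N` by `t · z = (t^{q_1} z_1, …, t^{q_N} z_N)` where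
`t^{q_i} = ∏_j t_j ^ q_{ij}`; with moment map `μ(z) = ∑ i ‖z i‖² q i`, the closure of the
orbit `T·z` meets `μ⁻¹(c)` iff `c` lies in the convex cone generated by the `q i` with
`z i ≠ 0`. -/
theorem orbitClosure_meets_momentFiber_iff
    {N k : ℕ} (q : Fin N → Fin k → ℤ) (z : Fin N → ℂ) (c : Fin k → ℝ) :
    (closure {w : Fin N → ℂ |
        ∃ t : Fin k → ℂˣ, w = fun i => (∏ j, (t j : ℂ) ^ (q i j)) * z i}
      ∩ {w : Fin N → ℂ | ∑ i, ‖w i‖ ^ 2 • (fun j => (q i j : ℝ)) = c}).Nonempty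
    ↔ ∃ s : Fin N → ℝ, (∀ i, 0 ≤ s i) ∧ (∀ i, z i = 0 → s i = 0) ∧
        c = ∑ i, s i • (fun j => (q i j : ℝ)) := by
  open OrbitConeProof in
  constructor
  · rintro ⟨w, hw1, hw2⟩
    have hw1' : w ∈ closure (Orb q z) := hw1
    have hw2' : ∑ i, ‖w i‖ ^ 2 • (fun j => (q i j : ℝ)) = c := hw2
    refine ⟨fun i => ‖w i‖ ^ 2, fun i => by positivity, ?_, hw2'.symm⟩
    intro i hzi
    have hcl : closure (Orb q z) ⊆ {w : Fin N → ℂ | w i = 0} := by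
      refine closure_minimal ?_ (isClosed_eq (continuous_apply i) continuous_const)
      rintro w' ⟨t, rfl⟩
      simp [hzi]
    have hwi : w i = 0 := hcl hw1'
    simp [hwi]
  · rintro ⟨s, hs0, hsz, hc⟩
    obtain ⟨w, hw1, hw2⟩ := key q c _ z rfl s hs0 hsz hc
    exact ⟨w, hw1, hw2⟩
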